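/- Let l, s, w be positive integers, let G be a graph, and let Q and Q' be two ((s+1)^{l+1}·w^{l^2})-polypaths in G with V(Q) ∩ V(Q') = ∅. Then either (a) there exists an (s,l)-cluster (S, L) in G such that either S ⊆ V(Q) and L ⊆ Q', or S ⊆ V(Q') and L ⊆ Q; or (b) there exist subfamilies W ⊆ Q and W' ⊆ Q' with |W| = |W'| = w such that every vertex of V(W) has neighbors in fewer than l paths of W', and every vertex of V(W') has neighbors in fewer than l paths of W. -/

import Mathlib

open scoped Classical

/-- `l` is the vertex sequence of an induced path in `G`. -/
def IsPathList {V : Type} (G : SimpleGraph V) (l : List V) : Prop :=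
  l ≠ [] ∧ l.Nodup ∧ ∀ i j : Fin l.length,
    (G.Adj (l.get i) (l.get j) ↔ (i.1 + 1 = j.1 ∨ j.1 + 1 = i.1))

/-- `P` is a `w`-polypath in `G`: a set of `w` pairwise vertex-disjoint
induced paths. -/
def IsPolypath {V : Type} (G : SimpleGraph V) (w : ℕ) (P : Finset (List V)) : Prop :=
  P.card = w ∧ (∀ p ∈ P, IsPathList G p) ∧
  ∀ p ∈ P, ∀ q ∈ P, p ≠ q → ∀ v ∈ p, v ∉ q

/-- `(S, L)` is an `(s,l)`-cluster in `G`. -/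
def IsClusterP {V : Type} (G : SimpleGraph V) (s l : ℕ)
    (S : Finset V) (L : Finset (List V)) : Prop :=
  S.card = s ∧ IsPolypath G l L ∧
  (∀ p ∈ L, ∀ v ∈ p, v ∉ S) ∧
  (∀ x ∈ S, ∀ p ∈ L, ∃ v ∈ p, G.Adj x v)

/-- If at least `s` vertices of `V(A)` are complete to an `l`-subset `L` of `B`,
we can build an `(s,l)`-cluster. -/
lemma build_cluster {V : Type} (G : SimpleGraph V) (s l : ℕ)
    (A B : Finset (List V))
    (hB : ∀ p ∈ B, IsPathList G p)
    (hBdisj : ∀ p ∈ B, ∀ q ∈ B, p ≠ q → ∀ v ∈ p, v ∉ q)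
    (hAB : ∀ p ∈ A, ∀ p' ∈ B, ∀ v ∈ p, v ∉ p')
    (L : Finset (List V)) (hLB : L ∈ B.powersetCard l)
    (hbig : s ≤ ((A.biUnion fun p => p.toFinset).filter
      (fun v => ∀ q ∈ L, ∃ u ∈ q, G.Adj v u)).card) :
    ∃ S : Finset V, (∀ x ∈ S, ∃ p ∈ A, x ∈ p) ∧ L ⊆ B ∧ IsClusterP G s l S L := by
  classical
  obtain ⟨hLsub, hLcard⟩ := Finset.mem_powersetCard.mp hLB
  obtain ⟨S, hSsub, hScard⟩ := Finset.exists_subset_card_eq hbig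
  have hSmem : ∀ x ∈ S, x ∈ (A.biUnion fun p => p.toFinset) ∧
      ∀ q ∈ L, ∃ u ∈ q, G.Adj x u := by
    intro x hx
    exact Finset.mem_filter.mp (hSsub hx)
  have hSA : ∀ x ∈ S, ∃ p ∈ A, x ∈ p := by
    intro x hx
    obtain ⟨p, hp, hxp⟩ := Finset.mem_biUnion.mp (hSmem x hx).1
    exact ⟨p, hp, List.mem_toFinset.mp hxp⟩
  refine ⟨S, hSA, hLsub, hScard,
    ⟨hLcard, fun p hp => hB p (hLsub hp),
      fun p hp q hq => hBdisj p (hLsub hp) q (hLsub hq)⟩, ?_, ?_⟩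
  · intro p hp v hv hvS
    obtain ⟨p', hp', hvp'⟩ := hSA v hvS
    exact hAB p' hp' p (hLsub hp) v hvp' hv
  · intro x hx p hp
    exact (hSmem x hx).2 p hp

/-- Counting lemma: if for every `l`-subset `L` of `W'` there are fewer than `s`
vertices of `V(F)` complete to `L`, then fewer than `(s-1) * C(|W'|, l)` paths of
`F` contain a vertex with neighbors in at least `l` paths of `W'`. -/
lemma bad_count {V : Type} (G : SimpleGraph V) (s l : ℕ)
    (F W' : Finset (List V))
    (hF : ∀ p ∈ F, ∀ q ∈ F, p ≠ q → ∀ v ∈ p, v ∉ q)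
    (hsmall : ∀ L ∈ W'.powersetCard l,
      ((F.biUnion fun p => p.toFinset).filter
        (fun v => ∀ q ∈ L, ∃ u ∈ q, G.Adj v u)).card < s) :
    (F.filter (fun p => ∃ v ∈ p,
      l ≤ (W'.filter (fun q => ∃ u ∈ q, G.Adj v u)).card)).card
      ≤ (s - 1) * Nat.choose W'.card l := by
  classical
  set Bad := F.filter (fun p => ∃ v ∈ p,
      l ≤ (W'.filter (fun q => ∃ u ∈ q, G.Adj v u)).card) with hBadDef
  rcases Bad.eq_empty_or_nonempty with hBe | ⟨p₀, hp₀⟩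
  · simp [hBe]
  obtain ⟨-, v₀, -, -⟩ := Finset.mem_filter.mp hp₀
  haveI : Inhabited V := ⟨v₀⟩
  have hch : ∀ p ∈ Bad, ∃ x : V × Finset (List V), x.1 ∈ p ∧
      x.2 ⊆ W' ∧ x.2.card = l ∧ ∀ q ∈ x.2, ∃ u ∈ q, G.Adj x.1 u := by
    intro p hp
    obtain ⟨-, v, hv, hcard⟩ := Finset.mem_filter.mp hp
    obtain ⟨L, hLsub, hLcard⟩ := Finset.exists_subset_card_eq hcard
    exact ⟨(v, L), hv, fun q hq => (Finset.mem_filter.mp (hLsub hq)).1, hLcard,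
      fun q hq => (Finset.mem_filter.mp (hLsub hq)).2⟩
  choose! x hx1 hx2 hx3 hx4 using hch
  have hmap : ∀ p ∈ Bad, (x p).2 ∈ W'.powersetCard l := by
    intro p hp
    exact Finset.mem_powersetCard.mpr ⟨hx2 p hp, hx3 p hp⟩
  have key := Finset.card_eq_sum_card_fiberwise hmap
  have hfiber : ∀ L ∈ W'.powersetCard l,
      (Bad.filter (fun p => (x p).2 = L)).card ≤ s - 1 := by
    intro L hL
    have hinj : (Bad.filter (fun p => (x p).2 = L)).card ≤
        ((F.biUnion fun p => p.toFinset).filter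
          (fun v => ∀ q ∈ L, ∃ u ∈ q, G.Adj v u)).card := by
      apply Finset.card_le_card_of_injOn (fun p => (x p).1)
      · intro p hp
        obtain ⟨hpBad, hpL⟩ := Finset.mem_filter.mp hp
        have hpF : p ∈ F := (Finset.mem_filter.mp hpBad).1
        refine Finset.mem_filter.mpr ⟨Finset.mem_biUnion.mpr
          ⟨p, hpF, List.mem_toFinset.mpr (hx1 p hpBad)⟩, ?_⟩
        intro q hq
        exact hx4 p hpBad q (hpL ▸ hq)
      · intro p hp q hq heq
        obtain ⟨hpBad, -⟩ := Finset.mem_filter.mp hp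
        obtain ⟨hqBad, -⟩ := Finset.mem_filter.mp hq
        have hpF : p ∈ F := (Finset.mem_filter.mp hpBad).1
        have hqF : q ∈ F := (Finset.mem_filter.mp hqBad).1
        by_contra hne
        have heq' : (x p).1 = (x q).1 := heq
        exact hF p hpF q hqF hne (x p).1 (hx1 p hpBad) (by rw [heq']; exact hx1 q hqBad)
    exact hinj.trans (Nat.le_pred_of_lt (hsmall L hL))
  calc Bad.card = ∑ L ∈ W'.powersetCard l, (Bad.filter (fun p => (x p).2 = L)).card := key
    _ ≤ (W'.powersetCard l).card • (s - 1) := Finset.sum_le_card_nsmul _ _ _ hfiber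
    _ = (s - 1) * Nat.choose W'.card l := by
        rw [Finset.card_powersetCard, smul_eq_mul, mul_comm]

theorem stmt5 (l s w : ℕ) (hl : 0 < l) (hs : 0 < s) (hw : 0 < w)
    (V : Type) (G : SimpleGraph V) (Q Q' : Finset (List V))
    (hQ : IsPolypath G ((s + 1) ^ (l + 1) * w ^ (l ^ 2)) Q)
    (hQ' : IsPolypath G ((s + 1) ^ (l + 1) * w ^ (l ^ 2)) Q')
    (hdisj : ∀ p ∈ Q, ∀ p' ∈ Q', ∀ v ∈ p, v ∉ p') :
    (∃ (S : Finset V) (L : Finset (List V)),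
      (((∀ x ∈ S, ∃ p ∈ Q, x ∈ p) ∧ L ⊆ Q') ∨
       ((∀ x ∈ S, ∃ p ∈ Q', x ∈ p) ∧ L ⊆ Q)) ∧
      IsClusterP G s l S L) ∨
    (∃ W ⊆ Q, ∃ W' ⊆ Q', W.card = w ∧ W'.card = w ∧
      (∀ p ∈ W, ∀ v ∈ p, (W'.filter (fun q => ∃ u ∈ q, G.Adj v u)).card < l) ∧
      (∀ p ∈ W', ∀ v ∈ p, (W.filter (fun q => ∃ u ∈ q, G.Adj v u)).card < l)) := by
  classical
  set N := (s + 1) ^ (l + 1) * w ^ (l ^ 2) with hN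
  by_cases hA : ∃ (S : Finset V) (L : Finset (List V)),
      (((∀ x ∈ S, ∃ p ∈ Q, x ∈ p) ∧ L ⊆ Q') ∨
       ((∀ x ∈ S, ∃ p ∈ Q', x ∈ p) ∧ L ⊆ Q)) ∧
      IsClusterP G s l S L
  · exact Or.inl hA
  right
  have hdisj' : ∀ p ∈ Q', ∀ p' ∈ Q, ∀ v ∈ p, v ∉ p' := by
    intro p hp p' hp' v hv hv'
    exact hdisj p' hp' p hp v hv' hv
  -- no cluster means: complete-vertex sets are small
  have hsmall1 : ∀ L ∈ Q'.powersetCard l,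
      ((Q.biUnion fun p => p.toFinset).filter
        (fun v => ∀ q ∈ L, ∃ u ∈ q, G.Adj v u)).card < s := by
    intro L hL
    by_contra hcon
    push_neg at hcon
    obtain ⟨S, hS1, hS2, hS3⟩ := build_cluster G s l Q Q' hQ'.2.1 hQ'.2.2 hdisj L hL hcon
    exact hA ⟨S, L, Or.inl ⟨hS1, hS2⟩, hS3⟩
  have hsmall2 : ∀ L ∈ Q.powersetCard l,
      ((Q'.biUnion fun p => p.toFinset).filter
        (fun v => ∀ q ∈ L, ∃ u ∈ q, G.Adj v u)).card < s := by
    intro L hL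
    by_contra hcon
    push_neg at hcon
    obtain ⟨S, hS1, hS2, hS3⟩ := build_cluster G s l Q' Q hQ.2.1 hQ.2.2 hdisj' L hL hcon
    exact hA ⟨S, L, Or.inr ⟨hS1, hS2⟩, hS3⟩
  -- arithmetic
  set m := w + (s - 1) * Nat.choose w l with hm
  have hw_pow : w ≤ w ^ l := Nat.le_self_pow hl.ne' w
  have hpow_pow : w ^ l ≤ w ^ (l ^ 2) :=
    Nat.pow_le_pow_right hw (Nat.le_self_pow (by norm_num) l)
  have hm_le : m ≤ s * w ^ l := by
    have : m ≤ w ^ l + (s - 1) * w ^ l :=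
      Nat.add_le_add hw_pow (Nat.mul_le_mul_left _ (Nat.choose_le_pow w l))
    calc m ≤ w ^ l + (s - 1) * w ^ l := this
      _ = (1 + (s - 1)) * w ^ l := by ring
      _ = s * w ^ l := by
          congr 1
          omega
  have hs_le : s ≤ (s + 1) ^ (l + 1) := le_trans (Nat.le_succ s)
    (Nat.le_self_pow (Nat.succ_ne_zero l) (s + 1))
  have hmN : m ≤ N := hm_le.trans (Nat.mul_le_mul hs_le hpow_pow)
  have hkey : 1 + (s - 1) * s ^ l ≤ (s + 1) ^ (l + 1) := by
    have h1 : (1 : ℕ) ≤ (s + 1) ^ l := Nat.one_le_pow _ _ (Nat.succ_pos s)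
    have h2 : (s - 1) * s ^ l ≤ s * (s + 1) ^ l :=
      Nat.mul_le_mul (Nat.sub_le s 1) (Nat.pow_le_pow_left (Nat.le_succ s) l)
    calc 1 + (s - 1) * s ^ l ≤ (s + 1) ^ l + s * (s + 1) ^ l := Nat.add_le_add h1 h2
      _ = (s + 1) ^ (l + 1) := by ring
  have hstepA : w + (s - 1) * Nat.choose m l ≤ N := by
    have hch : Nat.choose m l ≤ s ^ l * w ^ (l ^ 2) := by
      calc Nat.choose m l ≤ m ^ l := Nat.choose_le_pow m l
        _ ≤ (s * w ^ l) ^ l := Nat.pow_le_pow_left hm_le l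
        _ = s ^ l * w ^ (l * l) := by rw [mul_pow, ← pow_mul]
        _ = s ^ l * w ^ (l ^ 2) := by rw [pow_two]
    calc w + (s - 1) * Nat.choose m l
        ≤ w ^ (l ^ 2) + (s - 1) * (s ^ l * w ^ (l ^ 2)) :=
          Nat.add_le_add (hw_pow.trans hpow_pow) (Nat.mul_le_mul_left _ hch)
      _ = (1 + (s - 1) * s ^ l) * w ^ (l ^ 2) := by ring
      _ ≤ (s + 1) ^ (l + 1) * w ^ (l ^ 2) :=
          Nat.mul_le_mul_right _ hkey
      _ = N := rfl
  -- choose W₁' ⊆ Q' of size m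
  obtain ⟨W₁', hW₁'sub, hW₁'card⟩ := Finset.exists_subset_card_eq (s := Q') (n := m) (by rw [hQ'.1]; exact hmN)
  -- step A: remove bad paths of Q w.r.t. W₁'
  set Bad1 := Q.filter (fun p => ∃ v ∈ p,
      l ≤ (W₁'.filter (fun q => ∃ u ∈ q, G.Adj v u)).card) with hBad1
  have hBad1card : Bad1.card ≤ (s - 1) * Nat.choose m l := by
    have := bad_count G s l Q W₁' hQ.2.2 (by
      intro L hL
      obtain ⟨hLsub, hLcard⟩ := Finset.mem_powersetCard.mp hL
      exact hsmall1 L (Finset.mem_powersetCard.mpr ⟨hLsub.trans hW₁'sub, hLcard⟩))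
    rwa [hW₁'card] at this
  have hQsdiff : w ≤ (Q \ Bad1).card := by
    have h1 : w + Bad1.card ≤ N := le_trans (Nat.add_le_add_left hBad1card w) hstepA
    rw [Finset.card_sdiff_of_subset (Finset.filter_subset _ _), hQ.1]
    exact Nat.le_sub_of_add_le h1
  obtain ⟨W, hWsub', hWcard⟩ := Finset.exists_subset_card_eq hQsdiff
  have hWQ : W ⊆ Q := hWsub'.trans (Finset.sdiff_subset)
  -- step B: remove bad paths of W₁' w.r.t. W
  set Bad2 := W₁'.filter (fun p => ∃ v ∈ p,
      l ≤ (W.filter (fun q => ∃ u ∈ q, G.Adj v u)).card) with hBad2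
  have hBad2card : Bad2.card ≤ (s - 1) * Nat.choose w l := by
    have := bad_count G s l W₁' W
      (fun p hp q hq => hQ'.2.2 p (hW₁'sub hp) q (hW₁'sub hq))
      (by
        intro L hL
        obtain ⟨hLsub, hLcard⟩ := Finset.mem_powersetCard.mp hL
        have h2 := hsmall2 L (Finset.mem_powersetCard.mpr ⟨hLsub.trans hWQ, hLcard⟩)
        refine lt_of_le_of_lt (Finset.card_le_card ?_) h2
        exact Finset.filter_subset_filter _
          (Finset.biUnion_subset_biUnion_of_subset_left _ hW₁'sub))
    rwa [hWcard] at this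
  have hW₁'sdiff : w ≤ (W₁' \ Bad2).card := by
    have h1 : w + Bad2.card ≤ m := by
      rw [hm]; exact Nat.add_le_add_left hBad2card w
    rw [Finset.card_sdiff_of_subset (Finset.filter_subset _ _), hW₁'card]
    exact Nat.le_sub_of_add_le h1
  obtain ⟨W', hW'sub', hW'card⟩ := Finset.exists_subset_card_eq hW₁'sdiff
  have hW'W₁' : W' ⊆ W₁' := hW'sub'.trans (Finset.sdiff_subset)
  refine ⟨W, hWQ, W', hW'W₁'.trans hW₁'sub, hWcard, hW'card, ?_, ?_⟩
  · intro p hp v hv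
    have hnot : p ∉ Bad1 := (Finset.mem_sdiff.mp (hWsub' hp)).2
    by_contra hcon
    push_neg at hcon
    exact hnot (Finset.mem_filter.mpr ⟨hWQ hp, v, hv,
      hcon.trans (Finset.card_le_card (Finset.filter_subset_filter _ hW'W₁'))⟩)
  · intro p hp v hv
    have hnot : p ∉ Bad2 := (Finset.mem_sdiff.mp (hW'sub' hp)).2
    by_contra hcon
    push_neg at hcon
    exact hnot (Finset.mem_filter.mpr ⟨hW'W₁' hp, v, hv, hcon⟩)
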